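/- Let E ⊕ K be a direct sum of Hilbert spaces, U = [[A, B], [C, D]] unitary on E ⊕ K, E(z) a strict contraction on K, and τ(z) = A + B E(z)(I − D E(z))⁻¹ C the associated transfer function. If A is completely non-unitary (A has no nonzero reducing subspace on which it acts as a unitary; equivalently, there is no nonzero v ∈ E with A v = λ v and A* v = conj(λ) v for some unimodular λ), then τ(z) has no unimodular eigenvalue: there is no nonzero v ∈ E and λ ∈ ℂ with |λ| = 1 such that τ(z) v = λ v. -/

import Mathlib

open ContinuousLinearMap

set_option maxHeartbeats 1000000 in
/-- If `U = [[A, B], [C, D]]` is a unitary on `E ⊕ K`, `Ez` is a strict contraction on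
`K`, and the block `A` is completely non-unitary (no nonzero joint unimodular
eigenvector of `A` and `A*`), then the transfer function
`τ = A + B Ez (I − D Ez)⁻¹ C` has no unimodular eigenvalue. -/
theorem transfer_function_no_unimodular_eigenvalue
    {E K : Type*} [NormedAddCommGroup E] [InnerProductSpace ℂ E] [CompleteSpace E]
    [NormedAddCommGroup K] [InnerProductSpace ℂ K] [CompleteSpace K]
    (A : E →L[ℂ] E) (B : K →L[ℂ] E) (C : E →L[ℂ] K) (D : K →L[ℂ] K)
    (h1 : adjoint A ∘L A + adjoint C ∘L C = 1)
    (h2 : adjoint A ∘L B + adjoint C ∘L D = 0)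
    (h3 : adjoint B ∘L B + adjoint D ∘L D = 1)
    (h4 : A ∘L adjoint A + B ∘L adjoint B = 1)
    (h5 : A ∘L adjoint C + B ∘L adjoint D = 0)
    (h6 : C ∘L adjoint C + D ∘L adjoint D = 1)
    (Ez : K →L[ℂ] K) (hEz : ‖Ez‖ < 1)
    (hcnu : ∀ (v : E) (lam : ℂ), ‖lam‖ = 1 → A v = lam • v →
      adjoint A v = (starRingEnd ℂ) lam • v → v = 0) :
    ¬ ∃ (v : E) (lam : ℂ), v ≠ 0 ∧ ‖lam‖ = 1 ∧
        (A + B ∘L Ez ∘L Ring.inverse (1 - D ∘L Ez) ∘L C) v = lam • v := by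
  rintro ⟨v, lam, hv, hlam, heig⟩
  -- `D` is a contraction, from `h3`
  have hDy : ∀ y : K, ‖D y‖ ≤ ‖y‖ := by
    intro y
    have hb : ‖B y‖ ^ 2 + ‖D y‖ ^ 2 = ‖y‖ ^ 2 := by
      have h := congrArg (fun T : K →L[ℂ] K => (inner ℂ y (T y) : ℂ)) h3
      simp only [add_apply, comp_apply, one_apply_eq_self, inner_add_right,
        adjoint_inner_right] at h
      simp only [inner_self_eq_norm_sq_to_K] at h
      exact_mod_cast h
    nlinarith [norm_nonneg (B y), norm_nonneg (D y), norm_nonneg y]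
  have hDnorm : ‖D‖ ≤ 1 := by
    refine opNorm_le_bound D zero_le_one fun y => ?_
    simpa using hDy y
  have hDEz : ‖D ∘L Ez‖ < 1 := by
    calc ‖D ∘L Ez‖ ≤ ‖D‖ * ‖Ez‖ := opNorm_comp_le D Ez
    _ ≤ 1 * ‖Ez‖ := by
        have := norm_nonneg Ez
        nlinarith
    _ < 1 := by rw [one_mul]; exact hEz
  -- `1 - D ∘L Ez` is invertible
  have hinv : (1 - D ∘L Ez) * Ring.inverse (1 - D ∘L Ez) = 1 :=
    Ring.mul_inverse_cancel _ (isUnit_one_sub_of_norm_lt_one hDEz)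
  set w : K := Ring.inverse (1 - D ∘L Ez) (C v) with hwdef
  set x : K := Ez w with hxdef
  -- `(1 - D Ez) w = C v`, i.e. `C v + D x = w`
  have hw : w - D x = C v := by
    have h := congrArg (fun T : K →L[ℂ] K => T (C v)) hinv
    simpa [mul_apply, comp_apply, sub_apply, one_apply, hwdef, hxdef] using h
  have hCvDx : C v + D x = w := by rw [← hw]; abel
  -- the eigenvalue equation reads `A v + B x = lam • v`
  have hAv : A v + B x = lam • v := by
    simpa [add_apply, comp_apply, hwdef, hxdef] using heig
  -- unitarity norm identity at `(v, x)`
  have h2' : adjoint B ∘L A + adjoint D ∘L C = 0 := by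
    have h := congrArg ContinuousLinearMap.adjoint h2
    simpa [adjoint_comp, adjoint_adjoint, map_add] using h
  have expand : (inner ℂ (A v + B x) (A v + B x) : ℂ) + inner ℂ (C v + D x) (C v + D x)
      = inner ℂ v v + inner ℂ x x := by
    have e1 : (inner ℂ (A v) (A v) : ℂ) + inner ℂ (C v) (C v) = inner ℂ v v := by
      rw [← adjoint_inner_right, ← adjoint_inner_right, ← inner_add_right]
      have hvv : adjoint A (A v) + adjoint C (C v) = v := by
        have h := congrArg (fun T : E →L[ℂ] E => T v) h1
        simpa [add_apply, comp_apply, one_apply] using h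
      rw [hvv]
    have e2 : (inner ℂ (A v) (B x) : ℂ) + inner ℂ (C v) (D x) = 0 := by
      rw [← adjoint_inner_right, ← adjoint_inner_right, ← inner_add_right]
      have hvv : adjoint A (B x) + adjoint C (D x) = 0 := by
        have h := congrArg (fun T : K →L[ℂ] E => T x) h2
        simpa [add_apply, comp_apply] using h
      rw [hvv, inner_zero_right]
    have e3 : (inner ℂ (B x) (A v) : ℂ) + inner ℂ (D x) (C v) = 0 := by
      rw [← adjoint_inner_right B x (A v), ← adjoint_inner_right D x (C v),
        ← inner_add_right]
      have hvv : adjoint B (A v) + adjoint D (C v) = 0 := by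
        have h := congrArg (fun T : E →L[ℂ] K => T v) h2'
        simpa [add_apply, comp_apply] using h
      rw [hvv, inner_zero_right]
    have e4 : (inner ℂ (B x) (B x) : ℂ) + inner ℂ (D x) (D x) = inner ℂ x x := by
      rw [← adjoint_inner_right B x (B x), ← adjoint_inner_right D x (D x),
        ← inner_add_right]
      have hvv : adjoint B (B x) + adjoint D (D x) = x := by
        have h := congrArg (fun T : K →L[ℂ] K => T x) h3
        simpa [add_apply, comp_apply, one_apply] using h
      rw [hvv]
    simp only [inner_add_add_self]
    linear_combination e1 + e2 + e3 + e4
  have key : ‖A v + B x‖ ^ 2 + ‖C v + D x‖ ^ 2 = ‖v‖ ^ 2 + ‖x‖ ^ 2 := by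
    have h := expand
    simp only [inner_self_eq_norm_sq_to_K] at h
    exact_mod_cast h
  rw [hAv, hCvDx] at key
  have hnl : ‖lam • v‖ = ‖v‖ := by rw [norm_smul, hlam, one_mul]
  rw [hnl] at key
  have hwx : ‖w‖ ^ 2 = ‖x‖ ^ 2 := by linarith
  -- but `‖x‖ ≤ ‖Ez‖ ‖w‖ < ‖w‖` unless `w = 0`
  have hxle : ‖x‖ ≤ ‖Ez‖ * ‖w‖ := Ez.le_opNorm w
  have hw0 : w = 0 := by
    have hx2 : ‖x‖ ^ 2 ≤ (‖Ez‖ * ‖w‖) ^ 2 := by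
      have h0 : (0:ℝ) ≤ ‖x‖ := norm_nonneg x
      nlinarith [hxle]
    have hEz2 : ‖Ez‖ ^ 2 < 1 := by nlinarith [norm_nonneg Ez]
    have hsq : ‖w‖ ^ 2 ≤ 0 := by
      nlinarith [hx2, hwx, hEz2, sq_nonneg ‖w‖]
    have : ‖w‖ ^ 2 = 0 := le_antisymm hsq (sq_nonneg _)
    have : ‖w‖ = 0 := by
      have := pow_eq_zero_iff (n := 2) (by norm_num) |>.mp this
      exact this
    exact norm_eq_zero.mp this
  have hx0 : x = 0 := by rw [hxdef, hw0, map_zero]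
  have hCv : C v = 0 := by rw [← hw, hw0, hx0, map_zero, sub_zero]
  have hAveq : A v = lam • v := by
    have := hAv
    rwa [hx0, map_zero, add_zero] at this
  -- adjoint eigenvalue equation
  have h1v : adjoint A (A v) + adjoint C (C v) = v := by
    have h := congrArg (fun T : E →L[ℂ] E => T v) h1
    simpa [add_apply, comp_apply, one_apply] using h
  rw [hCv, map_zero, add_zero, hAveq, map_smul] at h1v
  have hl : (starRingEnd ℂ) lam * lam = 1 := by
    have : lam * (starRingEnd ℂ) lam = 1 := by
      rw [Complex.mul_conj']
      simp [Complex.sq_norm, Complex.normSq_eq_norm_sq, hlam]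
    rw [mul_comm] at this
    exact this
  have hAstar : adjoint A v = (starRingEnd ℂ) lam • v := by
    calc adjoint A v = ((starRingEnd ℂ) lam * lam) • adjoint A v := by rw [hl, one_smul]
    _ = (starRingEnd ℂ) lam • (lam • adjoint A v) := by rw [mul_smul]
    _ = (starRingEnd ℂ) lam • v := by rw [h1v]
  exact hv (hcnu v lam hlam hAveq hAstar)
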